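/- Let (S, Δ, P) be a probability space, let (α,β) be an (α,β)-pair, let 0 < γ ≤ 1, and let {X_n} be a sequence of real-valued random variables on S such that there is a constant M > 0 with P(|X_n| ≤ M) = 1 for all n. If X_n →^{PS_{αβ}^{γ}} X, then for every r > 0, X_n →^{ES_{αβ}^{γ,r}} X. -/

import Mathlib

open MeasureTheory Filter Set

/-- An (α,β)-pair: two non-decreasing sequences of positive reals with
`a n ≤ b n` for all `n` and `b n - a n → ∞`. -/
def ABPair (a b : ℕ → ℝ) : Prop :=
  Monotone a ∧ Monotone b ∧ (∀ n, 0 < a n) ∧ (∀ n, a n ≤ b n) ∧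
    Tendsto (fun n => b n - a n) atTop atTop

/-- The set of natural indices `k ∈ [a n, b n]` satisfying a predicate `p`. -/
def abIdx (a b : ℕ → ℝ) (n : ℕ) (p : ℕ → Prop) : Set ℕ :=
  {k : ℕ | a n ≤ (k : ℝ) ∧ (k : ℝ) ≤ b n ∧ p k}

/-- αβ-statistical convergence of order γ of a real sequence `x` to `l`. -/
def ABStatConv (a b : ℕ → ℝ) (γ : ℝ) (x : ℕ → ℝ) (l : ℝ) : Prop :=
  ∀ ε > 0,
    Tendsto (fun n => ((abIdx a b n fun k => ε ≤ |x k - l|).ncard : ℝ) / (b n - a n + 1) ^ γ)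
      atTop (nhds 0)

/-- αβ-statistical convergence of order γ in probability of the sequence of random
variables `X` to the random variable `L`, w.r.t. the probability measure `P`. -/
def PSConv {Ω : Type*} [MeasurableSpace Ω] (P : Measure Ω)
    (a b : ℕ → ℝ) (γ : ℝ) (X : ℕ → Ω → ℝ) (L : Ω → ℝ) : Prop :=
  ∀ ε > 0, ∀ δ > 0,
    Tendsto (fun n =>
      ((abIdx a b n fun k => δ ≤ (P {ω | ε ≤ |X k ω - L ω|}).toReal).ncard : ℝ)
        / (b n - a n + 1) ^ γ) atTop (nhds 0)

/-- αβ-strong p-Cesàro summability of order γ in probability. -/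
def PWConv {Ω : Type*} [MeasurableSpace Ω] (P : Measure Ω)
    (a b : ℕ → ℝ) (γ p : ℝ) (X : ℕ → Ω → ℝ) (L : Ω → ℝ) : Prop :=
  ∀ ε > 0,
    Tendsto (fun n =>
      (∑ k ∈ Finset.Icc ⌈a n⌉₊ ⌊b n⌋₊, ((P {ω | ε ≤ |X k ω - L ω|}).toReal) ^ p)
        / (b n - a n + 1) ^ γ) atTop (nhds 0)

/-- αβ-statistical convergence of order γ in r-th expectation. -/
def ESConv {Ω : Type*} [MeasurableSpace Ω] (P : Measure Ω)
    (a b : ℕ → ℝ) (γ r : ℝ) (X : ℕ → Ω → ℝ) (L : Ω → ℝ) : Prop :=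
  ∀ ε > 0,
    Tendsto (fun n =>
      ((abIdx a b n fun k => ε ≤ ∫ ω, |X k ω - L ω| ^ r ∂P).ncard : ℝ)
        / (b n - a n + 1) ^ γ) atTop (nhds 0)

/-- αβ-statistical convergence of order γ in distribution: the distribution functions
converge αβ-statistically of order γ at every continuity point of the limit d.f. -/
def DSConv {Ω : Type*} [MeasurableSpace Ω] (P : Measure Ω)
    (a b : ℕ → ℝ) (γ : ℝ) (X : ℕ → Ω → ℝ) (L : Ω → ℝ) : Prop :=
  ∀ x : ℝ, ContinuousAt (fun t => (P {ω | L ω ≤ t}).toReal) x →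
    ABStatConv a b γ (fun n => (P {ω | X n ω ≤ x}).toReal) ((P {ω | L ω ≤ x}).toReal)

/-- `K ⊆ ℕ` has αβ-density of order γ zero. -/
def ABDensityZero (a b : ℕ → ℝ) (γ : ℝ) (K : Set ℕ) : Prop :=
  Tendsto (fun n => ((abIdx a b n fun k => k ∈ K).ncard : ℝ) / (b n - a n + 1) ^ γ)
    atTop (nhds 0)

/-- αβ-statistical limit superior of order γ of a real sequence. -/
noncomputable def abStatLimsup (a b : ℕ → ℝ) (γ : ℝ) (x : ℕ → ℝ) : ℝ :=
  sSup {t : ℝ | ¬ ABDensityZero a b γ {k | t < x k}}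

/-- αβ-statistical limit inferior of order γ of a real sequence. -/
noncomputable def abStatLiminf (a b : ℕ → ℝ) (γ : ℝ) (x : ℕ → ℝ) : ℝ :=
  sInf {t : ℝ | ¬ ABDensityZero a b γ {k | x k < t}}
lemma abIdx_finite (a b : ℕ → ℝ) (n : ℕ) (p : ℕ → Prop) :
    (abIdx a b n p).Finite := by
  apply (Set.finite_Iic ⌊b n⌋₊).subset
  intro k hk
  exact Set.mem_Iic.mpr (Nat.le_floor hk.2.1)

lemma exists_not_of_density_zero (a b : ℕ → ℝ) (hab : ABPair a b) (γ : ℝ) (hγ1 : γ ≤ 1)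
    (p : ℕ → Prop)
    (h : Tendsto (fun n => ((abIdx a b n p).ncard : ℝ) / (b n - a n + 1) ^ γ) atTop (nhds 0)) :
    ∃ k, ¬ p k := by
  obtain ⟨-, -, hpos, hle, htend⟩ := hab
  by_contra hcon
  push_neg at hcon
  have h1 : ∀ᶠ n in atTop, (3 : ℝ) ≤ b n - a n := htend.eventually_ge_atTop 3
  have h2 : ∀ᶠ n in atTop,
      ((abIdx a b n p).ncard : ℝ) / (b n - a n + 1) ^ γ < 1/2 :=
    (h.eventually (eventually_lt_nhds (by norm_num : (0:ℝ) < 1/2)))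
  obtain ⟨n, h3, h4⟩ := (h1.and h2).exists
  have hb0 : 0 ≤ b n := le_trans (hpos n).le (hle n)
  have ha0 : 0 ≤ a n := (hpos n).le
  set A := ⌈a n⌉₊
  set B := ⌊b n⌋₊
  have hA : (A : ℝ) < a n + 1 := Nat.ceil_lt_add_one ha0
  have haA : a n ≤ (A : ℝ) := Nat.le_ceil _
  have hB : b n - 1 < (B : ℝ) := Nat.sub_one_lt_floor _
  have hBb : (B : ℝ) ≤ b n := Nat.floor_le hb0
  have hAB : A ≤ B := by
    have : (A : ℝ) ≤ (B : ℝ) := by linarith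
    exact_mod_cast this
  have hsub : (↑(Finset.Icc A B) : Set ℕ) ⊆ abIdx a b n p := by
    intro k hk
    simp only [Finset.coe_Icc, Set.mem_Icc] at hk
    refine ⟨le_trans haA ?_, le_trans ?_ hBb, hcon k⟩
    · exact_mod_cast Nat.cast_le.mpr hk.1
    · exact_mod_cast Nat.cast_le.mpr hk.2
  have hfin := abIdx_finite a b n p
  have hcard : (B - A + 1 : ℝ) ≤ ((abIdx a b n p).ncard : ℝ) := by
    have := Set.ncard_le_ncard hsub hfin
    rw [Set.ncard_coe_finset, Nat.card_Icc] at this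
    have h5 : ((B + 1 - A : ℕ) : ℝ) ≤ ((abIdx a b n p).ncard : ℝ) := by exact_mod_cast this
    have h6 : ((B + 1 - A : ℕ) : ℝ) = (B : ℝ) + 1 - A := by
      have : A ≤ B + 1 := le_trans hAB (Nat.le_succ _)
      push_cast [Nat.cast_sub this]
      ring
    linarith [h6 ▸ h5]
  have hden1 : (1 : ℝ) ≤ b n - a n + 1 := by linarith
  have hrpow : (b n - a n + 1) ^ γ ≤ b n - a n + 1 := by
    calc (b n - a n + 1) ^ γ ≤ (b n - a n + 1) ^ (1:ℝ) :=
          Real.rpow_le_rpow_of_exponent_le hden1 hγ1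
      _ = b n - a n + 1 := Real.rpow_one _
  have hdenpos : (0 : ℝ) < (b n - a n + 1) ^ γ :=
    Real.rpow_pos_of_pos (by linarith) _
  have hnum : b n - a n - 1 ≤ ((abIdx a b n p).ncard : ℝ) := by linarith
  have hq : (1:ℝ)/2 ≤ ((abIdx a b n p).ncard : ℝ) / (b n - a n + 1) ^ γ := by
    have step1 : (1:ℝ)/2 ≤ (b n - a n - 1) / (b n - a n + 1) := by
      rw [le_div_iff₀ (by linarith)]
      linarith
    have step2 : (b n - a n - 1) / (b n - a n + 1) ≤ (b n - a n - 1) / (b n - a n + 1) ^ γ := by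
      apply div_le_div_of_nonneg_left (by linarith) hdenpos hrpow
    have step3 : (b n - a n - 1) / (b n - a n + 1) ^ γ
        ≤ ((abIdx a b n p).ncard : ℝ) / (b n - a n + 1) ^ γ := by
      gcongr
    linarith
  linarith


/-- Theorem 3.2: if the `X_n` are a.s. uniformly bounded and `X_n → X` αβ-statistically
of order γ in probability, then `X_n → X` αβ-statistically of order γ in r-th expectation
for every `r > 0`. -/
theorem PSConv_implies_ESConv_of_bounded {Ω : Type*} [MeasurableSpace Ω]
    (P : Measure Ω) [IsProbabilityMeasure P]
    (a b : ℕ → ℝ) (hab : ABPair a b)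
    (γ : ℝ) (hγ0 : 0 < γ) (hγ1 : γ ≤ 1)
    (X : ℕ → Ω → ℝ) (X₀ : Ω → ℝ)
    (hX : ∀ n, Measurable (X n)) (hX₀ : Measurable X₀)
    (M : ℝ) (hM : 0 < M) (hbd : ∀ n, P {ω | |X n ω| ≤ M} = 1)
    (h : PSConv P a b γ X X₀) :
    ∀ r : ℝ, 0 < r → ESConv P a b γ r X X₀ := by
  -- the X n are a.s. bounded by M
  have hXnull : ∀ n, P {ω | M < |X n ω|} = 0 := by
    intro n
    have hms : MeasurableSet {ω | |X n ω| ≤ M} :=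
      measurableSet_le ((hX n).abs) measurable_const
    have hc : P {ω | |X n ω| ≤ M}ᶜ = P Set.univ - P {ω | |X n ω| ≤ M} :=
      measure_compl hms (measure_ne_top P _)
    have h2 : {ω | |X n ω| ≤ M}ᶜ = {ω | M < |X n ω|} := by
      ext ω; simp [not_le]
    rw [h2, hbd n, measure_univ, tsub_self] at hc
    exact hc
  -- X₀ is a.s. bounded by M
  have hX0null : P {ω | M < |X₀ ω|} = 0 := by
    have hm : ∀ m : ℕ, P {ω | M + 1/(m+1) ≤ |X₀ ω|} = 0 := by
      intro m
      set η : ℝ := 1/(m+1) with hηdef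
      have hη : 0 < η := by positivity
      set E := {ω | M + η ≤ |X₀ ω|} with hEdef
      have hEle : ∀ δ : ℝ, 0 < δ → (P E).toReal < δ := by
        intro δ hδ
        obtain ⟨k, hk⟩ := exists_not_of_density_zero a b hab γ hγ1 _ (h η hη δ hδ)
        push_neg at hk
        have hsub : E ⊆ {ω | η ≤ |X k ω - X₀ ω|} ∪ {ω | M < |X k ω|} := by
          intro ω hω
          by_cases hb : M < |X k ω|
          · exact Or.inr hb
          · push_neg at hb
            left
            have h1 : |X₀ ω| - |X k ω| ≤ |X₀ ω - X k ω| := abs_sub_abs_le_abs_sub _ _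
            have h2 : |X₀ ω - X k ω| = |X k ω - X₀ ω| := abs_sub_comm _ _
            have h3 : M + η ≤ |X₀ ω| := hω
            simp only [Set.mem_setOf_eq]
            linarith
        have hPE : P E ≤ P {ω | η ≤ |X k ω - X₀ ω|} := by
          calc P E ≤ P ({ω | η ≤ |X k ω - X₀ ω|} ∪ {ω | M < |X k ω|}) := measure_mono hsub
            _ ≤ P {ω | η ≤ |X k ω - X₀ ω|} + P {ω | M < |X k ω|} := measure_union_le _ _
            _ = P {ω | η ≤ |X k ω - X₀ ω|} := by rw [hXnull k, add_zero]
        calc (P E).toReal ≤ (P {ω | η ≤ |X k ω - X₀ ω|}).toReal :=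
              ENNReal.toReal_mono (measure_ne_top P _) hPE
          _ < δ := hk
      have htr : (P E).toReal = 0 := by
        by_contra hc
        have hpos : 0 < (P E).toReal := lt_of_le_of_ne ENNReal.toReal_nonneg (Ne.symm hc)
        exact absurd (hEle _ hpos) (lt_irrefl _)
      have : P E ≠ ⊤ := measure_ne_top P _
      exact (ENNReal.toReal_eq_zero_iff _).mp htr |>.resolve_right this
    have hsub : {ω | M < |X₀ ω|} ⊆ ⋃ m : ℕ, {ω | M + 1/(m+1) ≤ |X₀ ω|} := by
      intro ω hω
      have hpos : 0 < |X₀ ω| - M := by simpa [sub_pos] using hω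
      obtain ⟨m, hm'⟩ := exists_nat_one_div_lt hpos
      exact Set.mem_iUnion.mpr ⟨m, by simp only [Set.mem_setOf_eq]; push_cast; linarith [hm']⟩
    exact measure_mono_null hsub (measure_iUnion_null hm)
  intro r hr ε hε
  set ε' : ℝ := (ε/2) ^ r⁻¹ with hε'def
  have hε2 : (0:ℝ) < ε/2 := by linarith
  have hε'pos : 0 < ε' := Real.rpow_pos_of_pos hε2 _
  have hε'r : ε' ^ r = ε/2 := Real.rpow_inv_rpow hε2.le (ne_of_gt hr)
  have h2M : (0:ℝ) < (2*M) ^ r := Real.rpow_pos_of_pos (by linarith) _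
  set δ : ℝ := ε / (2 * (2*M)^r) with hδdef
  have hδ : 0 < δ := by positivity
  -- key integral estimate
  have hkey : ∀ k : ℕ, (P {ω | ε' ≤ |X k ω - X₀ ω|}).toReal < δ →
      ∫ ω, |X k ω - X₀ ω| ^ r ∂P < ε := by
    intro k hk
    set Bk := {ω | ε' ≤ |X k ω - X₀ ω|} with hBkdef
    have hBmeas : MeasurableSet Bk :=
      measurableSet_le measurable_const ((hX k).sub hX₀).abs
    set g : Ω → ℝ := fun ω => ε/2 + Bk.indicator (fun _ => (2*M)^r) ω with hgdef
    have hgint : Integrable g P :=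
      (integrable_const _).add ((integrable_const _).indicator hBmeas)
    have hae : ∀ᵐ ω ∂P, |X k ω| ≤ M ∧ |X₀ ω| ≤ M := by
      have h1 : ∀ᵐ ω ∂P, |X k ω| ≤ M := by
        rw [ae_iff]; convert hXnull k using 2; ext ω; simp [not_le]
      have h2 : ∀ᵐ ω ∂P, |X₀ ω| ≤ M := by
        rw [ae_iff]; convert hX0null using 2; ext ω; simp [not_le]
      exact h1.and h2
    have hfg : ∀ᵐ ω ∂P, |X k ω - X₀ ω| ^ r ≤ g ω := by
      filter_upwards [hae] with ω hω
      obtain ⟨h1, h2⟩ := hω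
      have hd : |X k ω - X₀ ω| ≤ 2*M := by
        calc |X k ω - X₀ ω| ≤ |X k ω| + |X₀ ω| := abs_sub _ _
          _ ≤ 2*M := by linarith
      by_cases hω' : ε' ≤ |X k ω - X₀ ω|
      · have : g ω = ε/2 + (2*M)^r := by
          simp [hgdef, Set.indicator_of_mem, hω', hBkdef]
        rw [this]
        have : |X k ω - X₀ ω| ^ r ≤ (2*M)^r :=
          Real.rpow_le_rpow (abs_nonneg _) hd hr.le
        linarith
      · have hg0 : g ω = ε/2 := by
          simp [hgdef, Set.indicator_of_notMem, hω', hBkdef]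
        rw [hg0]
        push_neg at hω'
        calc |X k ω - X₀ ω| ^ r ≤ ε' ^ r :=
              Real.rpow_le_rpow (abs_nonneg _) hω'.le hr.le
          _ = ε/2 := hε'r
    have hmeasf : Measurable fun ω => |X k ω - X₀ ω| ^ r := by fun_prop
    have hint : Integrable (fun ω => |X k ω - X₀ ω| ^ r) P := by
      apply Integrable.mono' hgint hmeasf.aestronglyMeasurable
      filter_upwards [hfg] with ω hω
      rwa [Real.norm_of_nonneg (Real.rpow_nonneg (abs_nonneg _) _)]
    have hIg : ∫ ω, g ω ∂P = ε/2 + (P Bk).toReal * (2*M)^r := by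
      rw [hgdef]
      rw [integral_add (integrable_const _) ((integrable_const _).indicator hBmeas)]
      rw [integral_const, integral_indicator_const _ hBmeas]
      simp [measure_univ, smul_eq_mul, Measure.real]
    have hfin : (P Bk).toReal * (2*M)^r < ε/2 := by
      have : (P Bk).toReal * (2*M)^r < δ * (2*M)^r := by
        apply mul_lt_mul_of_pos_right hk h2M
      have hδeq : δ * (2*M)^r = ε/2 := by
        rw [hδdef]; field_simp
      linarith
    calc ∫ ω, |X k ω - X₀ ω| ^ r ∂P ≤ ∫ ω, g ω ∂P := integral_mono_ae hint hgint hfg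
      _ = ε/2 + (P Bk).toReal * (2*M)^r := hIg
      _ < ε := by linarith
  -- subset comparison and squeeze
  have hdenpos : ∀ n, (0:ℝ) < (b n - a n + 1) ^ γ := by
    intro n
    have h1 := hab.2.2.1 n
    have h2 := hab.2.2.2.1 n
    exact Real.rpow_pos_of_pos (by linarith) _
  have hsub : ∀ n, abIdx a b n (fun k => ε ≤ ∫ ω, |X k ω - X₀ ω| ^ r ∂P)
      ⊆ abIdx a b n (fun k => δ ≤ (P {ω | ε' ≤ |X k ω - X₀ ω|}).toReal) := by
    intro n k hk
    refine ⟨hk.1, hk.2.1, ?_⟩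
    by_contra hc
    exact absurd hk.2.2 (not_le.mpr (hkey k (not_le.mp hc)))
  apply squeeze_zero (g := fun n =>
      ((abIdx a b n fun k => δ ≤ (P {ω | ε' ≤ |X k ω - X₀ ω|}).toReal).ncard : ℝ)
        / (b n - a n + 1) ^ γ)
  · intro n
    exact div_nonneg (Nat.cast_nonneg _) (hdenpos n).le
  · intro n
    have hc := Set.ncard_le_ncard (hsub n) (abIdx_finite a b n _)
    exact (div_le_div_iff_of_pos_right (hdenpos n)).mpr (by exact_mod_cast hc)
  · exact h ε' hε'pos δ hδ
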